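/- Suppose every element of A has totally disconnected spectrum. If φ : A → ℂ is continuous, φ(1) = 1, and φ(x)φ(y) ∈ σ(xy) for all x,y ∈ A, then φ is a character of A, i.e. φ is linear and multiplicative. -/

import Mathlib

open Filter Finset Topology

set_option linter.unusedSectionVars false
set_option maxHeartbeats 1000000

variable {A : Type*} [NormedRing A] [NormedAlgebra ℂ A] [CompleteSpace A]

section spec

lemma spec_translate {x : A} {t l : ℂ} (h : l ∈ spectrum ℂ (x + t • (1:A))) :
    l - t ∈ spectrum ℂ x := by
  rw [spectrum.mem_iff] at h ⊢
  have e : (algebraMap ℂ A) (l - t) - x = (algebraMap ℂ A) l - (x + t • (1:A)) := by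
    rw [map_sub, Algebra.algebraMap_eq_smul_one t]; abel
  rw [e]; exact h

lemma spec_smul {x : A} {t l : ℂ} (ht : t ≠ 0) (h : l ∈ spectrum ℂ (t • x)) :
    t⁻¹ * l ∈ spectrum ℂ x := by
  have := spectrum.unit_smul_eq_smul x (Units.mk0 t ht)
  rw [Units.smul_def, Units.val_mk0] at this
  rw [this, Set.mem_smul_set_iff_inv_smul_mem] at h
  simpa [Units.smul_def, smul_eq_mul] using h

lemma spec_conj (u : Aˣ) (z : A) : spectrum ℂ ((u : A) * z * (↑u⁻¹ : A)) = spectrum ℂ z := by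
  ext l
  rw [spectrum.mem_iff, spectrum.mem_iff]
  have key : (algebraMap ℂ A) l - (u : A) * z * (↑u⁻¹ : A)
      = (u : A) * ((algebraMap ℂ A) l - z) * (↑u⁻¹ : A) := by
    rw [mul_sub, sub_mul]
    congr 1
    rw [(Algebra.commutes l (u : A)).symm]
    rw [mul_assoc, Units.mul_inv, mul_one]
  rw [key, Units.isUnit_mul_units, Units.isUnit_units_mul]

end spec

section limits

variable {B : Type*} [NormedRing B] [NormedAlgebra ℂ B] [CompleteSpace B] [Nontrivial B]

lemma one_add_pow_eq (b : B) (k : ℕ) :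
    (1 + b) ^ k = ∑ j ∈ range (k + 1), (k.choose j : ℂ) • b ^ j := by
  rw [add_comm, (Commute.one_right b).add_pow]
  refine Finset.sum_congr rfl fun j hj => ?_
  rw [one_pow, mul_one, Nat.cast_smul_eq_nsmul, nsmul_eq_mul,
    (Nat.cast_commute (k.choose j) (b ^ j)).eq]

lemma pow_sub_pow_eq (a b : B) (n : ℕ) :
    a ^ n - b ^ n = ∑ i ∈ range n, a ^ (n - 1 - i) * (a - b) * b ^ i := by
  induction n with
  | zero => simp
  | succ n ih =>
    have key : a ^ (n+1) - b ^ (n+1) = a * (a ^ n - b ^ n) + (a - b) * b ^ n := by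
      rw [pow_succ', pow_succ']
      noncomm_ring
    rw [key, ih, Finset.mul_sum, Finset.sum_range_succ]
    congr 1
    · refine Finset.sum_congr rfl fun i hi => ?_
      rw [Finset.mem_range] at hi
      rw [← mul_assoc, ← mul_assoc, ← pow_succ']
      congr 3
      omega
    · simp

lemma norm_pow_sub_pow_le (a b : B) (K : ℝ) (n : ℕ)
    (ha : ∀ i, i ≤ n → ‖a ^ i‖ ≤ K) (hb : ∀ i, i ≤ n → ‖b ^ i‖ ≤ K) :
    ‖a ^ n - b ^ n‖ ≤ n * (K * K * ‖a - b‖) := by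
  rw [pow_sub_pow_eq]
  refine (norm_sum_le _ _).trans ?_
  have : ∀ i ∈ range n, ‖a ^ (n - 1 - i) * (a - b) * b ^ i‖ ≤ K * K * ‖a - b‖ := by
    intro i hi
    rw [Finset.mem_range] at hi
    have h1 : ‖a ^ (n - 1 - i)‖ ≤ K := ha _ (by omega)
    have h2 : ‖b ^ i‖ ≤ K := hb _ (by omega)
    have hK : (0:ℝ) ≤ K := (norm_nonneg _).trans h2
    have h0 : (0:ℝ) ≤ ‖a - b‖ := norm_nonneg _
    calc ‖a ^ (n - 1 - i) * (a - b) * b ^ i‖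
        ≤ ‖a ^ (n - 1 - i) * (a - b)‖ * ‖b ^ i‖ := norm_mul_le _ _
      _ ≤ (‖a ^ (n - 1 - i)‖ * ‖a - b‖) * ‖b ^ i‖ :=
          mul_le_mul_of_nonneg_right (norm_mul_le _ _) (norm_nonneg _)
      _ ≤ (K * ‖a - b‖) * K :=
          mul_le_mul (mul_le_mul_of_nonneg_right h1 h0) h2 (norm_nonneg _) (by positivity)
      _ = K * K * ‖a - b‖ := by ring
  refine (Finset.sum_le_sum this).trans ?_
  rw [Finset.sum_const, Finset.card_range, nsmul_eq_mul]


lemma norm_one_add_pow_le (x : B) {R : ℝ} (hR : ‖x‖ ≤ R) {n : ℕ} (hn : 0 < n) {k : ℕ}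
    (hk : k ≤ n) : ‖(1 + (n:ℂ)⁻¹ • x) ^ k‖ ≤ ‖(1:B)‖ * Real.exp R := by
  have hR0 : (0:ℝ) ≤ R := le_trans (norm_nonneg x) hR
  have hn' : (0:ℝ) < n := by exact_mod_cast hn
  set b := (n:ℂ)⁻¹ • x with hbdef
  have hb : ‖b‖ ≤ R / n := by
    rw [hbdef, norm_smul, norm_inv, Complex.norm_natCast, div_eq_inv_mul]
    exact mul_le_mul_of_nonneg_left hR (by positivity)
  have h1 : (1:ℝ) ≤ ‖(1:B)‖ := one_le_norm_one B
  have hpow : ∀ j : ℕ, ‖b ^ j‖ ≤ ‖(1:B)‖ * ‖b‖ ^ j := by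
    intro j
    rcases Nat.eq_zero_or_pos j with h | h
    · simp [h]
    · exact le_trans (norm_pow_le' b h) (le_mul_of_one_le_left (by positivity) h1)
  have hexp : (‖b‖ + 1) ^ k ≤ Real.exp R := by
    have e1 : (‖b‖ + 1) ^ k ≤ Real.exp ‖b‖ ^ k :=
      pow_le_pow_left₀ (by positivity) (Real.add_one_le_exp ‖b‖) k
    have e2 : Real.exp ‖b‖ ^ k = Real.exp (k * ‖b‖) := (Real.exp_nat_mul _ k).symm
    have e3 : (k:ℝ) * ‖b‖ ≤ R := by
      calc (k:ℝ) * ‖b‖ ≤ (n:ℝ) * (R / n) := by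
            refine mul_le_mul (by exact_mod_cast hk) hb (norm_nonneg _) (by positivity)
        _ = R := by field_simp
    exact e1.trans (e2 ▸ Real.exp_le_exp.mpr e3)
  calc ‖(1 + b) ^ k‖ ≤ ∑ j ∈ range (k+1), ‖(k.choose j : ℂ) • b ^ j‖ := by
        rw [one_add_pow_eq]; exact norm_sum_le _ _
    _ ≤ ∑ j ∈ range (k+1), (k.choose j : ℝ) * (‖(1:B)‖ * ‖b‖ ^ j) := by
        refine Finset.sum_le_sum fun j hj => ?_
        rw [norm_smul, Complex.norm_natCast]
        exact mul_le_mul_of_nonneg_left (hpow j) (by positivity)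
    _ = ‖(1:B)‖ * ∑ j ∈ range (k+1), ‖b‖ ^ j * 1 ^ (k - j) * (k.choose j : ℝ) := by
        rw [Finset.mul_sum]; exact Finset.sum_congr rfl fun j hj => by ring
    _ = ‖(1:B)‖ * (‖b‖ + 1) ^ k := by rw [← add_pow]
    _ ≤ ‖(1:B)‖ * Real.exp R := by
        exact mul_le_mul_of_nonneg_left hexp (by positivity)

lemma key_bound (x : B) {n : ℕ} (hn : 0 < n) :
    ‖(1 + (n:ℂ)⁻¹ • x) ^ n - ∑ k ∈ range (n+1), ((k.factorial : ℂ))⁻¹ • x ^ k‖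
      ≤ (∑ k ∈ range (n+1), ‖x‖ ^ k / (k.factorial : ℝ)) - (1 + ‖x‖ / n) ^ n := by
  have hn' : (0:ℝ) < n := by exact_mod_cast hn
  have lhs_eq : (1 + (n:ℂ)⁻¹ • x) ^ n
      = ∑ k ∈ range (n+1), ((n.choose k : ℂ) * ((n:ℂ)⁻¹)^k) • x ^ k := by
    rw [one_add_pow_eq]
    exact Finset.sum_congr rfl fun k _ => by rw [smul_pow, smul_smul]
  have rhs_eq : (1 + ‖x‖ / n) ^ n
      = ∑ k ∈ range (n+1), ((n.choose k : ℝ) * ((n:ℝ)⁻¹)^k) * ‖x‖ ^ k := by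
    rw [add_comm, add_pow]
    refine Finset.sum_congr rfl fun k _ => ?_
    rw [one_pow, mul_one, inv_pow, div_pow]
    ring
  rw [lhs_eq, ← Finset.sum_sub_distrib, rhs_eq, ← Finset.sum_sub_distrib]
  refine (norm_sum_le _ _).trans (Finset.sum_le_sum fun k hk => ?_)
  rw [Finset.mem_range] at hk
  have hcoeff : (n.choose k : ℝ) * ((n:ℝ)⁻¹)^k ≤ ((k.factorial : ℝ))⁻¹ := by
    have := Nat.choose_le_pow_div (α := ℝ) k n
    rw [div_eq_mul_inv] at this
    calc (n.choose k : ℝ) * ((n:ℝ)⁻¹)^k ≤ ((n:ℝ)^k * ((k.factorial : ℝ))⁻¹) * ((n:ℝ)⁻¹)^k :=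
          mul_le_mul_of_nonneg_right this (by positivity)
      _ = ((k.factorial : ℝ))⁻¹ * ((n:ℝ)^k * ((n:ℝ)⁻¹)^k) := by ring
      _ = ((k.factorial : ℝ))⁻¹ := by
          rw [← mul_pow, mul_inv_cancel₀ (ne_of_gt hn'), one_pow, mul_one]
  rcases Nat.eq_zero_or_pos k with hk0 | hkpos
  · subst hk0; simp
  · have e : ((n.choose k : ℂ) * ((n:ℂ)⁻¹)^k) • x ^ k - ((k.factorial : ℂ))⁻¹ • x ^ k
        = -( ((((k.factorial : ℝ))⁻¹ - (n.choose k : ℝ) * ((n:ℝ)⁻¹)^k : ℝ) : ℂ) • x ^ k) := by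
      rw [← sub_smul, ← neg_smul]
      congr 1
      push_cast
      ring
    rw [e, norm_neg, norm_smul, Complex.norm_real, Real.norm_eq_abs,
      abs_of_nonneg (by linarith)]
    calc (((k.factorial : ℝ))⁻¹ - (n.choose k : ℝ) * ((n:ℝ)⁻¹)^k) * ‖x ^ k‖
        ≤ (((k.factorial : ℝ))⁻¹ - (n.choose k : ℝ) * ((n:ℝ)⁻¹)^k) * ‖x‖ ^ k :=
          mul_le_mul_of_nonneg_left (norm_pow_le' x hkpos) (by linarith)
      _ = ‖x‖ ^ k / (k.factorial : ℝ) - (n.choose k : ℝ) * ((n:ℝ)⁻¹)^k * ‖x‖ ^ k := by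
          ring

lemma tendsto_one_add_pow (x : B) :
    Tendsto (fun n : ℕ => (1 + (n:ℂ)⁻¹ • x) ^ n) atTop (𝓝 (NormedSpace.exp x)) := by
  have hsum : HasSum (fun k : ℕ => ((k.factorial : ℂ))⁻¹ • x ^ k) (NormedSpace.exp x) :=
    NormedSpace.exp_series_hasSum_exp' x
  have hg : Tendsto (fun n : ℕ => ∑ k ∈ range (n+1), ((k.factorial : ℂ))⁻¹ • x ^ k)
      atTop (𝓝 (NormedSpace.exp x)) :=
    hsum.tendsto_sum_nat.comp (tendsto_add_atTop_nat 1)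
  have hrsum : HasSum (fun k : ℕ => ‖x‖ ^ k / (k.factorial : ℝ)) (Real.exp ‖x‖) := by
    have := NormedSpace.expSeries_div_hasSum_exp ‖x‖
    rwa [← Real.exp_eq_exp_ℝ] at this
  have hr1 : Tendsto (fun n : ℕ => ∑ k ∈ range (n+1), ‖x‖ ^ k / (k.factorial : ℝ))
      atTop (𝓝 (Real.exp ‖x‖)) :=
    hrsum.tendsto_sum_nat.comp (tendsto_add_atTop_nat 1)
  have hr2 := Real.tendsto_one_add_div_pow_exp ‖x‖
  have hdiff : Tendsto (fun n : ℕ =>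
      (∑ k ∈ range (n+1), ‖x‖ ^ k / (k.factorial : ℝ)) - (1 + ‖x‖ / n) ^ n)
      atTop (𝓝 0) := by
    have := hr1.sub hr2
    rwa [sub_self] at this
  have hzero : Tendsto (fun n : ℕ =>
      (1 + (n:ℂ)⁻¹ • x) ^ n - ∑ k ∈ range (n+1), ((k.factorial : ℂ))⁻¹ • x ^ k)
      atTop (𝓝 0) := by
    refine squeeze_zero_norm' ?_ hdiff
    filter_upwards [eventually_gt_atTop 0] with n hn
    exact key_bound x hn
  have := hzero.add hg
  simpa using this

lemma tendsto_one_add_pow' (c : ℕ → B) (L : B) (hc : Tendsto c atTop (𝓝 L)) :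
    Tendsto (fun n : ℕ => (1 + (n:ℂ)⁻¹ • c n) ^ n) atTop (𝓝 (NormedSpace.exp L)) := by
  set K : ℝ := ‖(1:B)‖ * Real.exp (‖L‖ + 1) with hK
  have hdiff : Tendsto (fun n : ℕ =>
      (1 + (n:ℂ)⁻¹ • c n) ^ n - (1 + (n:ℂ)⁻¹ • L) ^ n) atTop (𝓝 0) := by
    refine squeeze_zero_norm' (a := fun n => K * K * ‖c n - L‖) ?_ ?_
    · have hev : ∀ᶠ n : ℕ in atTop, ‖c n - L‖ ≤ 1 := by
        have h0 : Tendsto (fun n => c n - L) atTop (𝓝 (L - L)) := hc.sub tendsto_const_nhds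
        rw [sub_self] at h0
        filter_upwards [(h0.norm.eventually (eventually_le_nhds (show ‖(0:B)‖ < 1 by simp)))] with n hn
        simpa using hn
      filter_upwards [hev, eventually_gt_atTop 0] with n hcn hn
      have hn' : (0:ℝ) < n := by exact_mod_cast hn
      have hcL : ‖c n‖ ≤ ‖L‖ + 1 := by
        calc ‖c n‖ = ‖L + (c n - L)‖ := by congr 1; abel
          _ ≤ ‖L‖ + ‖c n - L‖ := norm_add_le _ _
          _ ≤ ‖L‖ + 1 := by linarith
      have ha : ∀ i, i ≤ n → ‖(1 + (n:ℂ)⁻¹ • c n) ^ i‖ ≤ K :=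
        fun i hi => norm_one_add_pow_le (c n) hcL hn hi
      have hb : ∀ i, i ≤ n → ‖(1 + (n:ℂ)⁻¹ • L) ^ i‖ ≤ K :=
        fun i hi => norm_one_add_pow_le L (by linarith [norm_nonneg L] : ‖L‖ ≤ ‖L‖ + 1) hn hi
      have hsub : (1 + (n:ℂ)⁻¹ • c n) - (1 + (n:ℂ)⁻¹ • L) = (n:ℂ)⁻¹ • (c n - L) := by
        rw [smul_sub]; abel
      calc ‖(1 + (n:ℂ)⁻¹ • c n) ^ n - (1 + (n:ℂ)⁻¹ • L) ^ n‖
          ≤ n * (K * K * ‖(1 + (n:ℂ)⁻¹ • c n) - (1 + (n:ℂ)⁻¹ • L)‖) :=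
            norm_pow_sub_pow_le _ _ K n ha hb
        _ = n * (K * K * ((n:ℝ)⁻¹ * ‖c n - L‖)) := by
            rw [hsub, norm_smul, norm_inv, Complex.norm_natCast]
        _ = K * K * ‖c n - L‖ := by field_simp
    · have h0 : Tendsto (fun n => c n - L) atTop (𝓝 (L - L)) := hc.sub tendsto_const_nhds
      rw [sub_self] at h0
      have := h0.norm
      rw [norm_zero] at this
      simpa using (this.const_mul (K * K))
  have := hdiff.add (tendsto_one_add_pow (x := L))
  simpa using this

end limits


section phi

variable [Nontrivial A] {φ : A → ℂ}

lemma phi_mem (hone : φ 1 = 1) (hmul : ∀ x y : A, φ x * φ y ∈ spectrum ℂ (x * y)) (x : A) :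
    φ x ∈ spectrum ℂ x := by
  simpa [hone] using hmul x 1

lemma const_of (htd : ∀ x : A, IsTotallyDisconnected (spectrum ℂ x)) (z : A) {s : Set ℂ}
    (hs : IsPreconnected s) {f : ℂ → ℂ} (hf : ContinuousOn f s)
    (hmem : ∀ t ∈ s, f t ∈ spectrum ℂ z) {a b : ℂ} (ha : a ∈ s) (hb : b ∈ s) : f a = f b := by
  have himg : f '' s ⊆ spectrum ℂ z := by
    rintro - ⟨t, ht, rfl⟩; exact hmem t ht
  exact htd z (f '' s) himg (hs.image f hf) (Set.mem_image_of_mem f ha)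
    (Set.mem_image_of_mem f hb)

lemma phi_translate (htd : ∀ x : A, IsTotallyDisconnected (spectrum ℂ x))
    (hc : Continuous φ) (hone : φ 1 = 1)
    (hmul : ∀ x y : A, φ x * φ y ∈ spectrum ℂ (x * y)) (x : A) (t : ℂ) :
    φ (x + t • (1:A)) = φ x + t := by
  have key : (fun s : ℂ => φ (x + s • (1:A)) - s) t = (fun s : ℂ => φ (x + s • (1:A)) - s) 0 := by
    refine const_of (f := fun s : ℂ => φ (x + s • (1:A)) - s) htd x isPreconnected_univ ?_ ?_
      (Set.mem_univ t) (Set.mem_univ 0)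
    · refine Continuous.continuousOn ?_
      exact (hc.comp (continuous_const.add (continuous_id.smul continuous_const))).sub
        continuous_id
    · intro s _
      exact spec_translate (phi_mem hone hmul (x + s • (1:A)))
  simp only [zero_smul, add_zero, sub_zero] at key
  linear_combination key

lemma phi_zero (hone : φ 1 = 1) (hmul : ∀ x y : A, φ x * φ y ∈ spectrum ℂ (x * y)) :
    φ 0 = 0 := by
  have := phi_mem hone hmul (0 : A)
  rwa [spectrum.zero_eq, Set.mem_singleton_iff] at this

lemma phi_smul (htd : ∀ x : A, IsTotallyDisconnected (spectrum ℂ x))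
    (hc : Continuous φ) (hone : φ 1 = 1)
    (hmul : ∀ x y : A, φ x * φ y ∈ spectrum ℂ (x * y)) (t : ℂ) (x : A) :
    φ (t • x) = t * φ x := by
  rcases eq_or_ne t 0 with rfl | ht
  · simp [phi_zero hone hmul]
  · have hs : IsPreconnected ({(0:ℂ)}ᶜ : Set ℂ) := by
      refine (isConnected_compl_singleton_of_one_lt_rank ?_ 0).isPreconnected
      rw [Complex.rank_real_complex]; norm_num
    have key : (fun s : ℂ => s⁻¹ * φ (s • x)) t = (fun s : ℂ => s⁻¹ * φ (s • x)) 1 := by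
      refine const_of (f := fun s : ℂ => s⁻¹ * φ (s • x)) htd x hs ?_ ?_
        (by simpa using ht) (by simp)
      · intro s hs'
        have hs0 : s ≠ 0 := hs'
        refine ContinuousAt.continuousWithinAt ?_
        exact (continuousAt_inv₀ hs0).mul
          ((hc.comp (continuous_id.smul continuous_const)).continuousAt)
      · intro s hs'
        exact spec_smul hs' (phi_mem hone hmul (s • x))
    simp only [inv_one, one_mul, one_smul] at key
    field_simp at key
    linear_combination key

lemma phi_unit_inv (hone : φ 1 = 1) (hmul : ∀ x y : A, φ x * φ y ∈ spectrum ℂ (x * y))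
    (u : Aˣ) : φ (u : A) * φ (↑u⁻¹ : A) = 1 := by
  have := hmul (u : A) (↑u⁻¹ : A)
  rwa [Units.mul_inv, spectrum.one_eq, Set.mem_singleton_iff] at this

lemma phi_mul_near_one (htd : ∀ x : A, IsTotallyDisconnected (spectrum ℂ x))
    (hc : Continuous φ) (hone : φ 1 = 1)
    (hmul : ∀ x y : A, φ x * φ y ∈ spectrum ℂ (x * y)) {d : A} (hd : ‖d‖ < 1) (z : A) :
    φ ((1 + d) * z) = φ (1 + d) * φ z := by
  rcases eq_or_ne d 0 with rfl | hd0
  · simp [hone]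
  · have hdpos : (0:ℝ) < ‖d‖ := norm_pos_iff.mpr hd0
    have hR : (1:ℝ) < ‖d‖⁻¹ := (one_lt_inv₀ hdpos).mpr hd
    -- units 1 + t • d for t in the ball
    have hunit : ∀ t : ℂ, t ∈ Metric.ball (0:ℂ) ‖d‖⁻¹ → ‖-(t • d)‖ < 1 := by
      intro t ht
      rw [Metric.mem_ball, dist_zero_right] at ht
      rw [norm_neg, norm_smul]
      have h2 : ‖t‖ * ‖d‖ < ‖d‖⁻¹ * ‖d‖ := by
        exact mul_lt_mul_of_pos_right ht hdpos
      rwa [inv_mul_cancel₀ (ne_of_gt hdpos)] at h2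
    set s : Set ℂ := Metric.ball (0:ℂ) ‖d‖⁻¹ with hsdef
    have hball : IsPreconnected s := (convex_ball _ _).isPreconnected
    have huval : ∀ (t : ℂ) (h : ‖-(t • d)‖ < 1),
        ((Units.oneSub (-(t • d)) h : Aˣ) : A) = 1 + t • d := by
      intro t h
      show 1 - -(t • d) = 1 + t • d
      rw [sub_neg_eq_add]
    have key : (fun t : ℂ => φ ((1 + t • d) * z) * φ (Ring.inverse (1 + t • d))) 1
        = (fun t : ℂ => φ ((1 + t • d) * z) * φ (Ring.inverse (1 + t • d))) 0 := by
      refine const_of (f := fun t : ℂ => φ ((1 + t • d) * z) * φ (Ring.inverse (1 + t • d)))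
        htd z hball ?_ ?_ (by rw [hsdef, Metric.mem_ball, dist_zero_right, norm_one]; exact hR)
        (by rw [hsdef]; exact Metric.mem_ball_self (by positivity))
      · intro t ht
        have h1 := hunit t ht
        refine ContinuousAt.continuousWithinAt ?_
        have hinv : ContinuousAt (fun t : ℂ => Ring.inverse (1 + t • d)) t := by
          have hcont : Continuous (fun t : ℂ => 1 + t • d) :=
            continuous_const.add (continuous_id.smul continuous_const)
          have h2 := NormedRing.inverse_continuousAt (Units.oneSub (-(t • d)) h1)
          rw [huval t h1] at h2
          exact ContinuousAt.comp (x := t) (g := Ring.inverse)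
            (f := fun t : ℂ => 1 + t • d) h2 hcont.continuousAt
        exact ((hc.comp ((continuous_const.add (continuous_id.smul continuous_const)).mul
          continuous_const)).continuousAt).mul (hc.continuousAt.comp hinv)
      · intro t ht
        have h1 := hunit t ht
        show φ ((1 + t • d) * z) * φ (Ring.inverse (1 + t • d)) ∈ spectrum ℂ z
        set u : Aˣ := Units.oneSub (-(t • d)) h1 with hu
        have huv : (u : A) = 1 + t • d := huval t h1
        have hinv : Ring.inverse (1 + t • d) = (↑u⁻¹ : A) := by
          rw [← huv, Ring.inverse_unit]
        rw [hinv]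
        have hm := hmul ((1 + t • d) * z) (↑u⁻¹ : A)
        rw [← huv] at hm ⊢
        rwa [spec_conj u z] at hm
    -- evaluate at 0
    have h0 : φ ((1 + (0:ℂ) • d) * z) * φ (Ring.inverse (1 + (0:ℂ) • d)) = φ z := by
      simp [hone]
    simp only at key
    rw [h0] at key
    simp only [one_smul] at key
    -- now at t = 1
    have h1 : ‖-d‖ < 1 := by simpa using hd
    set u : Aˣ := Units.oneSub (-d) h1 with hu
    have huv : (u : A) = 1 + d := by
      show 1 - -d = 1 + d
      rw [sub_neg_eq_add]
    have hinv : Ring.inverse (1 + d) = (↑u⁻¹ : A) := by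
      rw [← huv, Ring.inverse_unit]
    rw [hinv] at key
    have hp : φ (1 + d) * φ (↑u⁻¹ : A) = 1 := by
      have := phi_unit_inv hone hmul u
      rwa [huv] at this
    calc φ ((1 + d) * z) = φ ((1 + d) * z) * (φ (1 + d) * φ (↑u⁻¹ : A)) := by
          rw [hp, mul_one]
      _ = (φ ((1 + d) * z) * φ (↑u⁻¹ : A)) * φ (1 + d) := by ring
      _ = φ z * φ (1 + d) := by rw [key]
      _ = φ (1 + d) * φ z := mul_comm _ _

lemma phi_one_add (htd : ∀ x : A, IsTotallyDisconnected (spectrum ℂ x))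
    (hc : Continuous φ) (hone : φ 1 = 1)
    (hmul : ∀ x y : A, φ x * φ y ∈ spectrum ℂ (x * y)) (t : ℂ) (x : A) :
    φ (1 + t • x) = 1 + t * φ x := by
  have h1 : φ (t • x + (1:ℂ) • (1:A)) = φ (t • x) + 1 := phi_translate htd hc hone hmul (t • x) 1
  rw [one_smul] at h1
  rw [add_comm] at h1
  rw [h1, phi_smul htd hc hone hmul t x, add_comm]

lemma phi_prod_pow (htd : ∀ x : A, IsTotallyDisconnected (spectrum ℂ x))
    (hc : Continuous φ) (hone : φ 1 = 1)
    (hmul : ∀ x y : A, φ x * φ y ∈ spectrum ℂ (x * y)) {a b : A}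
    (ha : ‖a‖ < 1) (hb : ‖b‖ < 1) (n : ℕ) :
    φ (((1 + a) * (1 + b)) ^ n) = (φ (1 + a) * φ (1 + b)) ^ n := by
  induction n with
  | zero => simpa using hone
  | succ n ih =>
    have e1 : ((1 + a) * (1 + b)) ^ (n+1) = (1 + a) * ((1 + b) * (((1 + a) * (1 + b)) ^ n)) := by
      rw [pow_succ', mul_assoc]
    rw [e1, phi_mul_near_one htd hc hone hmul ha _,
      phi_mul_near_one htd hc hone hmul hb _, ih, pow_succ']
    ring

lemma phi_pow (htd : ∀ x : A, IsTotallyDisconnected (spectrum ℂ x))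
    (hc : Continuous φ) (hone : φ 1 = 1)
    (hmul : ∀ x y : A, φ x * φ y ∈ spectrum ℂ (x * y)) {a : A}
    (ha : ‖a‖ < 1) (n : ℕ) :
    φ ((1 + a) ^ n) = (φ (1 + a)) ^ n := by
  induction n with
  | zero => simpa using hone
  | succ n ih =>
    rw [pow_succ', phi_mul_near_one htd hc hone hmul ha _, ih, ← pow_succ']

lemma base_eq {B : Type*} [NormedRing B] [NormedAlgebra ℂ B] (s : ℂ) (p q : B) :
    (1 + s • p) * (1 + s • q) = 1 + s • (p + q + s • (p * q)) := by
  have h1 : (s • p) * (s • q) = s • (s • (p * q)) := by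
    rw [smul_mul_assoc, mul_smul_comm]
  simp only [mul_add, add_mul, mul_one, one_mul, h1, smul_add]
  abel

lemma inv_smul_tendsto_zero {B : Type*} [NormedRing B] [NormedAlgebra ℂ B] (w : B) :
    Tendsto (fun n : ℕ => ((n:ℂ)⁻¹ • w : B)) atTop (𝓝 0) := by
  have h1 : Tendsto (fun n : ℕ => ((n:ℝ))⁻¹) atTop (𝓝 0) :=
    tendsto_inv_atTop_zero.comp tendsto_natCast_atTop_atTop
  have h2 : Tendsto (fun n : ℕ => ((n:ℝ))⁻¹ * ‖w‖) atTop (𝓝 0) := by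
    have := h1.mul_const ‖w‖
    rwa [zero_mul] at this
  refine squeeze_zero_norm (fun n => ?_) h2
  rw [norm_smul, norm_inv, Complex.norm_natCast]

lemma phi_exp (htd : ∀ x : A, IsTotallyDisconnected (spectrum ℂ x))
    (hc : Continuous φ) (hone : φ 1 = 1)
    (hmul : ∀ x y : A, φ x * φ y ∈ spectrum ℂ (x * y)) (x : A) :
    φ (NormedSpace.exp x) = Complex.exp (φ x) := by
  have h1 := tendsto_one_add_pow (B := A) x
  have h2 : Tendsto (fun n : ℕ => φ ((1 + (n:ℂ)⁻¹ • x) ^ n)) atTop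
      (𝓝 (φ (NormedSpace.exp x))) := (hc.tendsto _).comp h1
  have hev : ∀ᶠ n : ℕ in atTop, φ ((1 + (n:ℂ)⁻¹ • x) ^ n) = (1 + (n:ℂ)⁻¹ * φ x) ^ n := by
    filter_upwards [tendsto_natCast_atTop_atTop.eventually_gt_atTop ‖x‖,
      eventually_gt_atTop 0] with n hn hn0
    have hn' : (0:ℝ) < n := by exact_mod_cast hn0
    have hd : ‖(n:ℂ)⁻¹ • x‖ < 1 := by
      rw [norm_smul, norm_inv, Complex.norm_natCast]
      have e : ((n:ℝ))⁻¹ * ‖x‖ = ‖x‖ / n := by ring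
      rw [e, div_lt_one hn']
      exact hn
    rw [phi_pow htd hc hone hmul hd n, phi_one_add htd hc hone hmul]
  have h4 : Tendsto (fun n : ℕ => (1 + (n:ℂ)⁻¹ * φ x) ^ n) atTop
      (𝓝 (NormedSpace.exp (φ x))) := by
    have := tendsto_one_add_pow (B := ℂ) (φ x)
    simpa [smul_eq_mul] using this
  have := tendsto_nhds_unique (h2.congr' hev) h4
  rw [Complex.exp_eq_exp_ℂ]
  exact this

lemma exp_eq_forall {a b : ℂ} (h : ∀ t : ℂ, Complex.exp (t * a) = Complex.exp (t * b)) :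
    a = b := by
  by_contra hne
  have hc0 : a - b ≠ 0 := sub_ne_zero.mpr hne
  have hkey := h ((Real.pi : ℂ) * Complex.I / (a - b))
  have h1 : Complex.exp ((Real.pi : ℂ) * Complex.I / (a - b) * a
      - (Real.pi : ℂ) * Complex.I / (a - b) * b) = 1 := by
    rw [Complex.exp_sub, hkey, div_self (Complex.exp_ne_zero _)]
  have h2 : (Real.pi : ℂ) * Complex.I / (a - b) * a
      - (Real.pi : ℂ) * Complex.I / (a - b) * b = (Real.pi : ℂ) * Complex.I := by
    field_simp
  rw [h2, Complex.exp_pi_mul_I] at h1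
  norm_num at h1

lemma phi_add (htd : ∀ x : A, IsTotallyDisconnected (spectrum ℂ x))
    (hc : Continuous φ) (hone : φ 1 = 1)
    (hmul : ∀ x y : A, φ x * φ y ∈ spectrum ℂ (x * y)) (x y : A) :
    φ (x + y) = φ x + φ y := by
  refine exp_eq_forall (fun t => ?_)
  -- A-side limit
  have hcseq : Tendsto (fun n : ℕ =>
      (t • x + t • y + (n:ℂ)⁻¹ • ((t • x) * (t • y)) : A)) atTop (𝓝 (t • x + t • y)) := by
    have := tendsto_const_nhds (x := (t • x + t • y : A)) (f := atTop (α := ℕ))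
    have h2 := this.add (inv_smul_tendsto_zero ((t • x) * (t • y)))
    simpa using h2
  have hA : Tendsto (fun n : ℕ =>
      ((1 + (n:ℂ)⁻¹ • (t • x)) * (1 + (n:ℂ)⁻¹ • (t • y))) ^ n) atTop
      (𝓝 (NormedSpace.exp (t • (x + y)))) := by
    have h0 := tendsto_one_add_pow' (B := A) _ _ hcseq
    rw [smul_add]
    refine h0.congr fun n => ?_
    rw [base_eq]
  -- ℂ-side limit
  have hcseq' : Tendsto (fun n : ℕ =>
      (t * φ x + t * φ y + (n:ℂ)⁻¹ • ((t * φ x) * (t * φ y)) : ℂ)) atTop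
      (𝓝 (t * φ x + t * φ y)) := by
    have := tendsto_const_nhds (x := (t * φ x + t * φ y : ℂ)) (f := atTop (α := ℕ))
    have h2 := this.add (inv_smul_tendsto_zero ((t * φ x) * (t * φ y)))
    simpa using h2
  have hB : Tendsto (fun n : ℕ =>
      ((1 + (n:ℂ)⁻¹ * (t * φ x)) * (1 + (n:ℂ)⁻¹ * (t * φ y))) ^ n) atTop
      (𝓝 (NormedSpace.exp (t * φ x + t * φ y))) := by
    have h0 := tendsto_one_add_pow' (B := ℂ) _ _ hcseq'
    refine h0.congr fun n => ?_
    have := base_eq (B := ℂ) ((n:ℂ)⁻¹) (t * φ x) (t * φ y)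
    simp only [smul_eq_mul] at this ⊢
    rw [this]
  -- φ applied to the A-side sequence
  have hev : ∀ᶠ n : ℕ in atTop,
      φ (((1 + (n:ℂ)⁻¹ • (t • x)) * (1 + (n:ℂ)⁻¹ • (t • y))) ^ n)
        = ((1 + (n:ℂ)⁻¹ * (t * φ x)) * (1 + (n:ℂ)⁻¹ * (t * φ y))) ^ n := by
    filter_upwards [tendsto_natCast_atTop_atTop.eventually_gt_atTop ‖t • x‖,
      tendsto_natCast_atTop_atTop.eventually_gt_atTop ‖t • y‖,
      eventually_gt_atTop 0] with n h1 h2 h0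
    have hn' : (0:ℝ) < n := by exact_mod_cast h0
    have ha : ‖(n:ℂ)⁻¹ • (t • x)‖ < 1 := by
      rw [norm_smul, norm_inv, Complex.norm_natCast]
      have e : ((n:ℝ))⁻¹ * ‖t • x‖ = ‖t • x‖ / n := by ring
      rw [e, div_lt_one hn']
      exact h1
    have hb : ‖(n:ℂ)⁻¹ • (t • y)‖ < 1 := by
      rw [norm_smul, norm_inv, Complex.norm_natCast]
      have e : ((n:ℝ))⁻¹ * ‖t • y‖ = ‖t • y‖ / n := by ring
      rw [e, div_lt_one hn']
      exact h2
    rw [phi_prod_pow htd hc hone hmul ha hb n,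
      phi_one_add htd hc hone hmul, phi_one_add htd hc hone hmul,
      phi_smul htd hc hone hmul, phi_smul htd hc hone hmul]
  have hφ : Tendsto (fun n : ℕ =>
      φ (((1 + (n:ℂ)⁻¹ • (t • x)) * (1 + (n:ℂ)⁻¹ • (t • y))) ^ n)) atTop
      (𝓝 (φ (NormedSpace.exp (t • (x + y))))) := (hc.tendsto _).comp hA
  have hval := tendsto_nhds_unique (hφ.congr' hev) hB
  rw [phi_exp htd hc hone hmul, phi_smul htd hc hone hmul] at hval
  rw [hval, ← Complex.exp_eq_exp_ℂ]
  ring_nf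

lemma phi_mul (htd : ∀ x : A, IsTotallyDisconnected (spectrum ℂ x))
    (hc : Continuous φ) (hone : φ 1 = 1)
    (hmul : ∀ x y : A, φ x * φ y ∈ spectrum ℂ (x * y)) (x z : A) :
    φ (x * z) = φ x * φ z := by
  set t : ℂ := ((‖x‖ + 1 : ℝ) : ℂ)⁻¹ with htdef
  have hpos : (0:ℝ) < ‖x‖ + 1 := by positivity
  have ht0 : t ≠ 0 := by
    rw [htdef]
    simp only [ne_eq, inv_eq_zero, Complex.ofReal_eq_zero]
    exact ne_of_gt hpos
  have hd : ‖t • x‖ < 1 := by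
    rw [norm_smul, htdef, norm_inv, Complex.norm_real, Real.norm_eq_abs, abs_of_pos hpos]
    rw [inv_mul_lt_iff₀ hpos, mul_one]
    linarith
  have key := phi_mul_near_one htd hc hone hmul hd z
  have lhs_eq : (1 + t • x) * z = z + t • (x * z) := by
    rw [add_mul, one_mul, smul_mul_assoc]
  rw [lhs_eq, phi_add htd hc hone hmul, phi_smul htd hc hone hmul,
    phi_one_add htd hc hone hmul] at key
  have : t * φ (x * z) = t * (φ x * φ z) := by linear_combination key
  exact mul_left_cancel₀ ht0 this

end phi

theorem stmt_8 (htd : ∀ x : A, IsTotallyDisconnected (spectrum ℂ x))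
    (φ : A → ℂ) (hc : Continuous φ)
    (hone : φ 1 = 1)
    (hmul : ∀ x y : A, φ x * φ y ∈ spectrum ℂ (x * y)) :
    (∀ x y : A, φ (x + y) = φ x + φ y) ∧
    (∀ (c : ℂ) (x : A), φ (c • x) = c * φ x) ∧
    (∀ x y : A, φ (x * y) = φ x * φ y) := by
  have hnt : Nontrivial A := by
    by_contra h
    rw [not_nontrivial_iff_subsingleton] at h
    have h1 := hmul 1 1
    rw [spectrum.mem_iff] at h1
    exact h1 (isUnit_of_subsingleton _)
  exact ⟨phi_add htd hc hone hmul, fun c x => phi_smul htd hc hone hmul c x,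
    phi_mul htd hc hone hmul⟩
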